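/- Let ℓ,c,q ≥ 1 be integers and r ≥ 0 an integer, and let (a_i)_{i≥1} be a real sequence such that a_i ≠ 0 for all i ≥ 1, a_i → +∞ as i → ∞, and a_{i+ℓ} − a_i = c for all i ≥ 1. Then the family (1/Π_{v=1}^q Π_{u=0}^ℓ a_{i_v+u}), indexed by tuples (i_1,…,i_q) ∈ ℤ^q with i_1 ≥ r+1 and i_{k+1} − i_k ≥ ℓ+1 for 1 ≤ k ≤ q−1, is summable, and its sum equals 1/(q! · c^q · Π_{u=0}^{ℓq−1} a_{r+1+u}). -/

import Mathlib

open scoped BigOperators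

/-- A cell of the plane `ℤ²`. -/
abbrev Cell : Type := ℤ × ℤ

/-- The partial order `⊴` on `ℤ²`: `(a,b) ⊴ (a',b')` iff `a ≥ a'` and `b ≥ b'`. -/
def cellLE (u v : Cell) : Prop := v.1 ≤ u.1 ∧ v.2 ≤ u.2

/-- The cylinder `C_ω = ℤ²/ℤω`. -/
abbrev Cyl (ω : Cell) : Type := Cell ⧸ AddSubgroup.zmultiples ω

/-- The natural projection `π : ℤ² → C_ω`. -/
def pr (ω : Cell) : Cell → Cyl ω := QuotientAddGroup.mk

/-- The induced relation `⊴` on the cylinder: `x ⊴ y` iff some lifts satisfy `x̃ ⊴ ỹ`. -/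
def cylLE (ω : Cell) (x y : Cyl ω) : Prop :=
  ∃ u v : Cell, pr ω u = x ∧ pr ω v = y ∧ cellLE u v

/-- The hook of `x` in a diagram `Θ ⊆ ℤ²`. -/
def hookSet (Θ : Set Cell) (x : Cell) : Set Cell :=
  Θ ∩ ({y | ∃ k : ℤ, 0 ≤ k ∧ y = x + (k, 0)} ∪ {y | ∃ k : ℤ, 1 ≤ k ∧ y = x + (0, k)})

/-- The hook length of `x` in `Θ`. -/
noncomputable def hookLen (Θ : Set Cell) (x : Cell) : ℕ := (hookSet Θ x).ncard

/-- The hook length of a cell of the cylinder, computed via a lift. -/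
noncomputable def cylHook (ω : Cell) (Θ : Set Cell) (x : Cyl ω) : ℕ :=
  hookLen Θ (Quotient.out x)

/-- The `ℤω`-orbit of a cell. -/
def zline (ω y : Cell) : Set Cell := {z | ∃ k : ℤ, z = y + k • ω}

/-- `S + ℤω`. -/
def perClosure (ω : Cell) (S : Set Cell) : Set Cell := {z | ∃ y ∈ S, ∃ k : ℤ, z = y + k • ω}

/-- Translation of a set of cells by `u`. -/
def shiftSet (u : Cell) (S : Set Cell) : Set Cell := (· + u) '' S

/-- The semi-infinite diagram `λ̄ = {(a,b) : 1 ≤ a ≤ m, b ≤ λ_a}`. -/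
def lowerDiag (m : ℤ) (lam : ℤ → ℤ) : Set Cell := {p | 1 ≤ p.1 ∧ p.1 ≤ m ∧ p.2 ≤ lam p.1}

/-- The Young diagram `{(a,b) : 1 ≤ a ≤ m, 1 ≤ b ≤ λ_a}`. -/
def youngDiag (m : ℤ) (lam : ℤ → ℤ) : Set Cell :=
  {p | 1 ≤ p.1 ∧ p.1 ≤ m ∧ 1 ≤ p.2 ∧ p.2 ≤ lam p.1}

/-- The skew diagram `λ/μ = {(a,b) : 1 ≤ a ≤ m, μ_a < b ≤ λ_a}`. -/
def skewDiag (m : ℤ) (lam mu : ℤ → ℤ) : Set Cell :=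
  {p | 1 ≤ p.1 ∧ p.1 ≤ m ∧ mu p.1 < p.2 ∧ p.2 ≤ lam p.1}

/-- The periodic diagram `λ̃ = λ̄ + ℤ(m,−ℓ)`. -/
def perDiag (m l : ℤ) (lam : ℤ → ℤ) : Set Cell := perClosure (m, -l) (lowerDiag m lam)

/-- The cylindric diagram `λ̂ = π(λ̃)`. -/
def cylDiag (m l : ℤ) (lam : ℤ → ℤ) : Set (Cyl (m, -l)) := pr (m, -l) '' perDiag m l lam

/-- `λ ∈ P_{m,ℓ}`: an `ℓ`-restricted generalized partition of length `m`
(only the values `λ_1, …, λ_m` are relevant). -/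
def IsRestricted (m l : ℤ) (lam : ℤ → ℤ) : Prop :=
  (∀ a : ℤ, 1 ≤ a → a < m → lam (a + 1) ≤ lam a) ∧ lam 1 - lam m ≤ l

/-- `y` is a `D`-active cell (with ambient diagram `Θ`). -/
def IsActive (Θ D : Set Cell) (y : Cell) : Prop :=
  y ∈ D ∧ y + (1, 0) ∈ Θ \ D ∧ y + (0, 1) ∈ Θ \ D ∧ y + (1, 1) ∈ Θ \ D

/-- One elementary excitation inside `Θ`. -/
def exciteStep (Θ D E : Set Cell) : Prop :=
  ∃ y, IsActive Θ D y ∧ E = (D \ {y}) ∪ {y + (1, 1)}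

/-- The excited diagrams of `M` in `Θ`. -/
def ExcitedSet (Θ M : Set Cell) : Set (Set Cell) :=
  {D | Relation.ReflTransGen (exciteStep Θ) M D}

/-- One periodic elementary excitation inside `Θ`. -/
def pExciteStep (ω : Cell) (Θ D E : Set Cell) : Prop :=
  ∃ y, IsActive Θ D y ∧ E = (D \ zline ω y) ∪ zline ω (y + (1, 1))

/-- The periodic excited diagrams of `M` in `Θ`. -/
def PExcitedSet (ω : Cell) (Θ M : Set Cell) : Set (Set Cell) :=
  {D | Relation.ReflTransGen (pExciteStep ω Θ) M D}

/-- The cylindric excited diagrams: images under `π` of the periodic excited diagrams. -/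
def CylExcitedSet (ω : Cell) (Θ M : Set Cell) : Set (Set (Cyl ω)) :=
  (fun D => pr ω '' D) '' PExcitedSet ω Θ M

/-- A linear extension of `S` (with respect to a relation `R`): a bijection
`ε : S → {1,…,n}` with `ε x < ε y` whenever `R x y` and `x ≠ y`. -/
def IsLinExt {α : Type} (R : α → α → Prop) (S : Set α) (n : ℕ) (ε : S → Fin n) : Prop :=
  Function.Bijective ε ∧ ∀ x y : S, R (x : α) (y : α) → (x : α) ≠ (y : α) → ε x < ε y

/-- The number of linear extensions of `S`. -/
noncomputable def linExtCount {α : Type} (R : α → α → Prop) (S : Set α) (n : ℕ) : ℕ :=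
  Nat.card {ε : S → Fin n // IsLinExt R S n ε}

/-- A reverse standard tableau on a (skew) diagram `S` of `n` cells. -/
def IsRST (S : Set Cell) (n : ℕ) (ε : S → Fin n) : Prop :=
  Function.Bijective ε ∧
    (∀ x y : S, (y : Cell) = (x : Cell) + (0, 1) → ε y < ε x) ∧
    (∀ x y : S, (y : Cell) = (x : Cell) + (1, 0) → ε y < ε x)

/-- An `ℓ`-restricted reverse standard tableau on a skew diagram of length `m`. -/
def IsRSTl (m l : ℤ) (S : Set Cell) (n : ℕ) (ε : S → Fin n) : Prop :=
  IsRST S n ε ∧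
    ∀ x y : S, (x : Cell).1 = 1 → (y : Cell) = (m, (x : Cell).2 - l) → ε x < ε y

/-- One lattice step: right by `(1,0)` or down by `(0,−1)`. -/
def stepRel (a b : Cell) : Prop := b - a = (1, 0) ∨ b - a = (0, -1)

/-- `p` is (the list of cells of) a lattice path from `u` to `v`. -/
def IsLatticePathList (u v : Cell) (p : List Cell) : Prop :=
  p.head? = some u ∧ p.getLast? = some v ∧ p.Chain' stepRel

/-- `L(u,v)`: lattice paths from `u` to `v`, identified with their underlying sets of cells. -/
def LPath (u v : Cell) : Set (Set Cell) :=
  {S | ∃ p : List Cell, IsLatticePathList u v p ∧ S = {x | x ∈ p}}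

/-- `L_Θ(u,v)`: lattice paths from `u` to `v` contained in `Θ`. -/
def LPathIn (Θ : Set Cell) (u v : Cell) : Set (Set Cell) := {S | S ∈ LPath u v ∧ S ⊆ Θ}

/-- One lattice step on the cylinder. -/
def cylStep (ω : Cell) (x y : Cyl ω) : Prop :=
  ∃ u v : Cell, pr ω u = x ∧ pr ω v = y ∧ stepRel u v

/-- `S` is a non-intersecting loop of length `n` in the cylinder. -/
def IsNILoop (ω : Cell) (n : ℕ) (S : Set (Cyl ω)) : Prop :=
  ∃ u : ZMod n → Cyl ω, Function.Injective u ∧ S = Set.range u ∧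
    ∀ i : ZMod n, cylStep ω (u i) (u (i + 1))

/-- `h^{s,t}_{m,ℓ}(x) = ℓ+m−a−b+dt+s+1` where `x = (a, b−dℓ)` with `2 ≤ b ≤ ℓ+1`, `d ≥ 0`. -/
def hst (m l s t : ℤ) (x : Cell) : ℤ :=
  l + m - x.1 - x.2 + ((l + 1 - x.2) / l) * (t - l) + s + 1

/-- The hook lengths `h_i` of the bar case: `h_{ℓt+j} = (ℓ+1)t+j = i + (i−1)/ℓ`. -/
def hbar (l i : ℤ) : ℤ := i + (i - 1) / l

/-- The index set of Lemma 6.2: tuples `(i_1,…,i_q) ∈ ℤ^q` with `i_1 ≥ r+1` and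
`i_{k+1} − i_k ≥ ℓ+1`. -/
def TagawaIndex (l q r : ℕ) : Type :=
  {v : Fin q → ℤ //
    (∀ h : 0 < q, (r : ℤ) + 1 ≤ v ⟨0, h⟩) ∧
    ∀ (i : ℕ) (h : i + 1 < q),
      v ⟨i, Nat.lt_of_succ_lt h⟩ + (l : ℤ) + 1 ≤ v ⟨i + 1, h⟩}

namespace Tg

open Filter


noncomputable def Pr (a : ℤ → ℝ) (i : ℤ) (n : ℕ) : ℝ := ∏ u ∈ Finset.range n, a (i + (u : ℤ))

theorem Pr_add (a : ℤ → ℝ) (i : ℤ) (n m : ℕ) :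
    Pr a i (n + m) = Pr a i n * Pr a (i + n) m := by
  unfold Pr
  rw [Finset.prod_range_add]
  congr 1
  refine Finset.prod_congr rfl fun u _ => ?_
  congr 1
  push_cast
  ring

theorem Pr_succ (a : ℤ → ℝ) (i : ℤ) (n : ℕ) :
    Pr a i (n + 1) = Pr a i n * a (i + n) := Finset.prod_range_succ _ _

theorem Pr_one (a : ℤ → ℝ) (i : ℤ) : Pr a i 1 = a i := by simp [Pr]

theorem Pr_ne_zero {a : ℤ → ℝ} (ha0 : ∀ i : ℤ, 1 ≤ i → a i ≠ 0) {i : ℤ} (hi : 1 ≤ i) (n : ℕ) :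
    Pr a i n ≠ 0 :=
  Finset.prod_ne_zero_iff.mpr fun u _ => ha0 _ (by omega)

theorem Pr_one_le {a : ℤ → ℝ} {N : ℤ} (hN : ∀ j, N ≤ j → 1 ≤ a j) {i : ℤ} (hi : N ≤ i) (n : ℕ) :
    1 ≤ Pr a i n := by
  have h : ∀ u ∈ Finset.range n, (1 : ℝ) ≤ a (i + (u : ℤ)) := fun u _ => hN _ (by omega)
  calc (1 : ℝ) = ∏ _u ∈ Finset.range n, (1 : ℝ) := by simp
    _ ≤ Pr a i n := Finset.prod_le_prod (fun u _ => zero_le_one) h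

theorem Pr_lower {a : ℤ → ℝ} {N : ℤ} (hN : ∀ j, N ≤ j → 1 ≤ a j) {i : ℤ} (hi : N ≤ i)
    {n : ℕ} (hn : 1 ≤ n) : a i ≤ Pr a i n := by
  obtain ⟨m, rfl⟩ : ∃ m, n = 1 + m := ⟨n - 1, by omega⟩
  rw [Pr_add, Pr_one]
  have hc : ((1 : ℕ) : ℤ) = 1 := by norm_num
  rw [hc]
  have h1 : 1 ≤ Pr a (i + 1) m := Pr_one_le hN (by omega) m
  have h2 := le_mul_of_one_le_right (by linarith [hN i hi] : (0:ℝ) ≤ a i) h1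
  linarith

theorem Pr_lower2 {a : ℤ → ℝ} {N : ℤ} (hN : ∀ j, N ≤ j → 1 ≤ a j) {i : ℤ} (hi : N ≤ i)
    {d : ℕ} (hd : 1 ≤ d) : a i * a (i + d) ≤ Pr a i (d + 1) := by
  rw [Pr_succ]
  have h1 := Pr_lower hN hi hd
  have h2 := hN (i + d) (by omega)
  exact mul_le_mul_of_nonneg_right h1 (by linarith)

theorem step {l c : ℕ} {a : ℤ → ℝ}
    (hper : ∀ i : ℤ, 1 ≤ i → a (i + (l : ℤ)) - a i = (c : ℝ)) (p : ℕ) :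
    ∀ i : ℤ, 1 ≤ i → a (i + (l * p : ℕ)) - a i = (p : ℝ) * c := by
  induction p with
  | zero => intro i hi; simp
  | succ p IH =>
    intro i hi
    have h1 := hper (i + (l * p : ℕ)) (by omega)
    have h2 := IH i hi
    have h3 : i + ((l * (p + 1) : ℕ) : ℤ) = (i + (l * p : ℕ)) + (l : ℤ) := by push_cast; ring
    rw [h3]
    push_cast at h1 h2 ⊢
    linarith

theorem oneDim {a : ℤ → ℝ} (ha0 : ∀ i : ℤ, 1 ≤ i → a i ≠ 0)
    (hatop : Tendsto a atTop atTop)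
    {d : ℕ} (hd : 1 ≤ d) {e : ℝ} (he : 0 < e)
    (hde : ∀ i : ℤ, 1 ≤ i → a (i + (d : ℤ)) - a i = e)
    {r : ℤ} (hr : 0 ≤ r) :
    HasSum (fun n : ℕ => (Pr a (r + 1 + n) (d + 1))⁻¹) ((e * Pr a (r + 1) d)⁻¹) := by
  obtain ⟨N0, hN0⟩ := eventually_atTop.mp (hatop.eventually_ge_atTop 1)
  set N : ℤ := max N0 1 with hNdef
  have hN1 : (1 : ℤ) ≤ N := le_max_right _ _
  have hN : ∀ j, N ≤ j → 1 ≤ a j := fun j hj => hN0 j (le_trans (le_max_left _ _) hj)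
  set K : ℕ := (N - (r + 1)).toNat with hK
  have hKN : ∀ n : ℕ, N ≤ r + 1 + ((n + K : ℕ) : ℤ) := by intro n; push_cast; omega
  -- summability
  set g : ℕ → ℝ := fun n => (a (r + 1 + n + K))⁻¹ with hg
  have hgN : ∀ n : ℕ, 1 ≤ a (r + 1 + (n : ℤ) + K) := by
    intro n
    refine hN _ ?_
    have := hKN n; push_cast at this; omega
  have hg0 : ∀ n, 0 ≤ g n := fun n => inv_nonneg.mpr (by linarith [hgN n])
  have hg1 : ∀ n, g n ≤ 1 := by
    intro n
    rw [hg]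
    exact inv_le_one_of_one_le₀ (hgN n)
  have hterm : ∀ n : ℕ,
      (Pr a (r + 1 + ((n + K : ℕ) : ℤ)) (d + 1))⁻¹ ≤ e⁻¹ * (g n - g (n + d)) := by
    intro n
    have hiN : N ≤ r + 1 + ((n + K : ℕ) : ℤ) := hKN n
    set i : ℤ := r + 1 + ((n + K : ℕ) : ℤ) with hi
    have hi1 : (1 : ℤ) ≤ i := by omega
    have hA := hN i hiN
    have hB := hN (i + d) (by omega)
    have hlow := Pr_lower2 hN hiN hd
    have h1 : (Pr a i (d + 1))⁻¹ ≤ (a i * a (i + d))⁻¹ := by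
      apply inv_anti₀ (by nlinarith) hlow
    have hgn : g n = (a i)⁻¹ := by
      rw [hg]; congr 2; rw [hi]; push_cast; ring
    have hgnd : g (n + d) = (a (i + d))⁻¹ := by
      rw [hg]; congr 2; rw [hi]; push_cast; ring
    have hei : a (i + d) - a i = e := hde i hi1
    have h2 : e⁻¹ * (g n - g (n + d)) = (a i * a (i + d))⁻¹ := by
      rw [hgn, hgnd]
      have hA0 : a i ≠ 0 := by intro h; rw [h] at hA; linarith
      have hB0 : a (i + d) ≠ 0 := by intro h; rw [h] at hB; linarith
      have he0 : e ≠ 0 := ne_of_gt he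
      field_simp
      linear_combination hei
    linarith [h1, h2]
  have hsum : Summable (fun n : ℕ => (Pr a (r + 1 + n) (d + 1))⁻¹) := by
    rw [← summable_nat_add_iff K]
    refine summable_of_sum_range_le (c := e⁻¹ * d) (fun n => ?_) (fun M => ?_)
    · exact inv_nonneg.mpr (le_trans zero_le_one (Pr_one_le hN (hKN n) _))
    · have h1 : ∑ n ∈ Finset.range M, (Pr a (r + 1 + ((n + K : ℕ) : ℤ)) (d + 1))⁻¹
          ≤ ∑ n ∈ Finset.range M, e⁻¹ * (g n - g (n + d)) :=
        Finset.sum_le_sum fun n _ => hterm n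
      have h2 : ∑ n ∈ Finset.range M, (g n - g (n + d)) ≤ ∑ n ∈ Finset.range d, g n := by
        rw [Finset.sum_sub_distrib]
        have e1 := Finset.sum_range_add g M d
        have e2 := Finset.sum_range_add g d M
        have e3 : ∑ n ∈ Finset.range M, g (d + n) = ∑ n ∈ Finset.range M, g (n + d) :=
          Finset.sum_congr rfl fun n _ => by rw [add_comm]
        have e4 : M + d = d + M := by omega
        rw [e4] at e1
        have hpos : 0 ≤ ∑ n ∈ Finset.range d, g (M + n) :=
          Finset.sum_nonneg fun n _ => hg0 _
        rw [e2, e3] at e1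
        linarith
      have h3 : ∑ n ∈ Finset.range d, g n ≤ d := by
        calc ∑ n ∈ Finset.range d, g n ≤ ∑ _n ∈ Finset.range d, (1 : ℝ) :=
              Finset.sum_le_sum fun n _ => hg1 n
          _ = d := by simp
      have hepos : (0 : ℝ) ≤ e⁻¹ := by positivity
      calc ∑ n ∈ Finset.range M, (Pr a (r + 1 + ((n + K : ℕ) : ℤ)) (d + 1))⁻¹
          ≤ ∑ n ∈ Finset.range M, e⁻¹ * (g n - g (n + d)) := h1
        _ = e⁻¹ * ∑ n ∈ Finset.range M, (g n - g (n + d)) := by rw [Finset.mul_sum]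
        _ ≤ e⁻¹ * d := mul_le_mul_of_nonneg_left (le_trans h2 h3) hepos
  -- telescoping
  set T : ℕ → ℝ := fun n => (Pr a (r + 1 + n) d)⁻¹ with hT
  have key : ∀ n : ℕ, (Pr a (r + 1 + n) (d + 1))⁻¹ = e⁻¹ * (T n - T (n + 1)) := by
    intro n
    have hb : ((r : ℤ) + 1 + ((n + 1 : ℕ) : ℤ)) = (r + 1 + (n : ℤ)) + 1 := by push_cast; ring
    have hTn1 : T (n + 1) = (Pr a ((r + 1 + (n : ℤ)) + 1) d)⁻¹ := by rw [hT]; simp only; rw [hb]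
    have hTn : T n = (Pr a (r + 1 + (n : ℤ)) d)⁻¹ := rfl
    rw [hTn1, hTn]
    set i : ℤ := r + 1 + (n : ℤ) with hi
    have hi1 : (1 : ℤ) ≤ i := by omega
    have hx : Pr a i d ≠ 0 := Pr_ne_zero ha0 hi1 d
    have hy : Pr a (i + 1) d ≠ 0 := Pr_ne_zero ha0 (by omega) d
    have hz1 : Pr a i (d + 1) = Pr a i d * a (i + d) := Pr_succ a i d
    have hz2 : Pr a i (d + 1) = a i * Pr a (i + 1) d := by
      have h : d + 1 = 1 + d := by omega
      rw [h, Pr_add, Pr_one]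
      norm_num
    have hei : a (i + d) - a i = e := hde i hi1
    have hA0 : a i ≠ 0 := ha0 i hi1
    have hB0 : a (i + d) ≠ 0 := ha0 _ (by omega)
    have he0 : e ≠ 0 := ne_of_gt he
    have hxy : a i * Pr a (i + 1) d = Pr a i d * a (i + d) := by rw [← hz2, ← hz1]
    rw [hz1]
    field_simp
    linear_combination (-(Pr a (i + 1) d)) * hei - hxy
  have hps : ∀ M : ℕ, ∑ n ∈ Finset.range M, (Pr a (r + 1 + (n : ℤ)) (d + 1))⁻¹
      = e⁻¹ * (T 0 - T M) := by
    intro M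
    calc ∑ n ∈ Finset.range M, (Pr a (r + 1 + (n : ℤ)) (d + 1))⁻¹
        = ∑ n ∈ Finset.range M, e⁻¹ * (T n - T (n + 1)) :=
          Finset.sum_congr rfl fun n _ => key n
      _ = e⁻¹ * ∑ n ∈ Finset.range M, (T n - T (n + 1)) := by rw [Finset.mul_sum]
      _ = e⁻¹ * (T 0 - T M) := by rw [Finset.sum_range_sub' T M]
  have hTlim : Tendsto T atTop (nhds 0) := by
    have h1 : Tendsto (fun M : ℕ => Pr a (r + 1 + M) d) atTop atTop := by
      refine tendsto_atTop_mono' atTop ?_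
        (hatop.comp (tendsto_atTop_add_const_left atTop (r + 1) tendsto_natCast_atTop_atTop))
      refine eventually_atTop.mpr ⟨K, fun M hM => ?_⟩
      have h5 : ((K : ℕ) : ℤ) ≤ (M : ℤ) := by exact_mod_cast hM
      have hNM : N ≤ r + 1 + (M : ℤ) := by omega
      exact Pr_lower hN hNM hd
    exact h1.inv_tendsto_atTop
  rw [Summable.hasSum_iff_tendsto_nat hsum]
  have hlim : Tendsto (fun M => e⁻¹ * (T 0 - T M)) atTop (nhds (e⁻¹ * (T 0 - 0))) :=
    (tendsto_const_nhds.sub hTlim).const_mul _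
  have hlim2 := hlim.congr (fun M => (hps M).symm)
  have hT0 : T 0 = (Pr a (r + 1) d)⁻¹ := by
    rw [hT]; norm_num
  rw [show (e * Pr a (r + 1) d)⁻¹ = e⁻¹ * (T 0 - 0) by rw [hT0, mul_inv, sub_zero]]
  exact hlim2

def natEquiv (r : ℤ) : ℕ ≃ {i : ℤ // r + 1 ≤ i} where
  toFun n := ⟨r + 1 + n, by omega⟩
  invFun i := (i.1 - (r + 1)).toNat
  left_inv n := by simp
  right_inv i := by
    have := i.2
    apply Subtype.ext
    simp
    omega

theorem oneDim' {a : ℤ → ℝ} (ha0 : ∀ i : ℤ, 1 ≤ i → a i ≠ 0)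
    (hatop : Tendsto a atTop atTop)
    {d : ℕ} (hd : 1 ≤ d) {e : ℝ} (he : 0 < e)
    (hde : ∀ i : ℤ, 1 ≤ i → a (i + (d : ℤ)) - a i = e)
    {r : ℤ} (hr : 0 ≤ r) :
    HasSum (fun i : {i : ℤ // r + 1 ≤ i} => (Pr a i.1 (d + 1))⁻¹) ((e * Pr a (r + 1) d)⁻¹) := by
  rw [← Equiv.hasSum_iff (natEquiv r)]
  exact oneDim ha0 hatop hd he hde hr

noncomputable def habs (a : ℤ → ℝ) (l : ℕ) : ℤ → ℝ := fun i =>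
  if 1 ≤ i then (∏ u ∈ Finset.range (l + 1), |a (i + (u : ℤ))|)⁻¹ else 0

theorem habs_nonneg (a : ℤ → ℝ) (l : ℕ) (i : ℤ) : 0 ≤ habs a l i := by
  unfold habs
  split
  · positivity
  · exact le_refl 0

theorem habs_summable {l c : ℕ} {a : ℤ → ℝ} (hl : 1 ≤ l) (hc : 1 ≤ c)
    (ha0 : ∀ i : ℤ, 1 ≤ i → a i ≠ 0) (hatop : Tendsto a atTop atTop)
    (hper : ∀ i : ℤ, 1 ≤ i → a (i + (l : ℤ)) - a i = (c : ℝ)) :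
    Summable (habs a l) := by
  obtain ⟨N0, hN0⟩ := eventually_atTop.mp (hatop.eventually_ge_atTop 1)
  set N : ℤ := max N0 1 with hNdef
  have hN1 : (1 : ℤ) ≤ N := le_max_right _ _
  have hN : ∀ j, N ≤ j → 1 ≤ a j := fun j hj => hN0 j (le_trans (le_max_left _ _) hj)
  apply Summable.of_nat_of_neg_add_one
  · -- positive part
    set N₀ : ℕ := N.toNat with hN₀
    rw [← summable_nat_add_iff N₀]
    have hkey : ∀ n : ℕ, habs a l ((n + N₀ : ℕ) : ℤ) = (Pr a ((N₀ : ℤ) - 1 + 1 + (n : ℤ)) (l + 1))⁻¹ := by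
      intro n
      have h1 : (1 : ℤ) ≤ ((n + N₀ : ℕ) : ℤ) := by omega
      have h2 : ((n + N₀ : ℕ) : ℤ) = (N₀ : ℤ) - 1 + 1 + (n : ℤ) := by push_cast; ring
      rw [habs, if_pos h1]
      rw [h2]
      congr 1
      refine Finset.prod_congr rfl fun u _ => ?_
      refine abs_of_nonneg ?_
      have := hN ((N₀ : ℤ) - 1 + 1 + (n : ℤ) + u) (by omega)
      linarith
    refine Summable.congr ?_ (fun n => (hkey n).symm)
    exact (oneDim ha0 hatop hl (Nat.cast_pos.mpr hc)
      hper (by omega : (0:ℤ) ≤ (N₀ : ℤ) - 1)).summable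
  · -- negative part is zero
    have hz : ∀ n : ℕ, habs a l (-((n : ℤ) + 1)) = 0 := fun n => if_neg (by omega)
    exact summable_zero.congr (fun n => (hz n).symm)

def Idx (l q : ℕ) (r : ℤ) : Type :=
  {v : Fin q → ℤ //
    (∀ h : 0 < q, r + 1 ≤ v ⟨0, h⟩) ∧
    ∀ (i : ℕ) (h : i + 1 < q),
      v ⟨i, Nat.lt_of_succ_lt h⟩ + (l : ℤ) + 1 ≤ v ⟨i + 1, h⟩}

theorem idx_coord_ge {l q : ℕ} {r : ℤ} (v : Idx l q r) :
    ∀ (j : ℕ) (hj : j < q), r + 1 ≤ v.1 ⟨j, hj⟩ := by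
  intro j
  induction j with
  | zero => intro hj; exact v.2.1 hj
  | succ j IH =>
    intro hj
    have h1 := v.2.2 j hj
    have h2 := IH (Nat.lt_of_succ_lt hj)
    omega

theorem pi_summable {l c : ℕ} {a : ℤ → ℝ} (hl : 1 ≤ l) (hc : 1 ≤ c)
    (ha0 : ∀ i : ℤ, 1 ≤ i → a i ≠ 0) (hatop : Tendsto a atTop atTop)
    (hper : ∀ i : ℤ, 1 ≤ i → a (i + (l : ℤ)) - a i = (c : ℝ)) :
    ∀ q : ℕ, Summable (fun v : Fin q → ℤ => ∏ k, habs a l (v k)) := by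
  intro q
  induction q with
  | zero =>
    haveI : Unique (Fin 0 → ℤ) := ⟨⟨fun k => k.elim0⟩, fun f => funext fun k => k.elim0⟩
    exact .of_finite
  | succ q IH =>
    have hmul := Summable.mul_of_nonneg (habs_summable hl hc ha0 hatop hper) IH
      (fun i => habs_nonneg a l i) (fun w => Finset.prod_nonneg fun k _ => habs_nonneg a l _)
    have := (Equiv.summable_iff (Fin.consEquiv fun _ => ℤ).symm).mpr hmul
    refine this.congr fun v => ?_
    simp only [Function.comp]
    rw [Fin.prod_univ_succ]
    rfl

theorem idx_summable_abs {l c : ℕ} {a : ℤ → ℝ} (hl : 1 ≤ l) (hc : 1 ≤ c)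
    (ha0 : ∀ i : ℤ, 1 ≤ i → a i ≠ 0) (hatop : Tendsto a atTop atTop)
    (hper : ∀ i : ℤ, 1 ≤ i → a (i + (l : ℤ)) - a i = (c : ℝ))
    (q : ℕ) {r : ℤ} (hr : 0 ≤ r) :
    Summable (fun v : Idx l q r =>
      |(∏ k : Fin q, ∏ u ∈ Finset.range (l + 1), a (v.1 k + (u : ℤ)))⁻¹|) := by
  have hS : Summable (fun v : Idx l q r => ∏ k, habs a l (v.1 k)) :=
    (pi_summable hl hc ha0 hatop hper q).comp_injective Subtype.val_injective
  refine hS.congr fun v => ?_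
  have hco : ∀ k : Fin q, (1 : ℤ) ≤ v.1 k := by
    intro k
    have h := idx_coord_ge v k.1 k.2
    rw [Fin.eta] at h
    omega
  rw [abs_inv, Finset.abs_prod]
  rw [← Finset.prod_inv_distrib]
  refine Finset.prod_congr rfl fun k _ => ?_
  rw [habs, if_pos (hco k), Finset.abs_prod]

theorem idx_summable {l c : ℕ} {a : ℤ → ℝ} (hl : 1 ≤ l) (hc : 1 ≤ c)
    (ha0 : ∀ i : ℤ, 1 ≤ i → a i ≠ 0) (hatop : Tendsto a atTop atTop)
    (hper : ∀ i : ℤ, 1 ≤ i → a (i + (l : ℤ)) - a i = (c : ℝ))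
    (q : ℕ) {r : ℤ} (hr : 0 ≤ r) :
    Summable (fun v : Idx l q r =>
      (∏ k : Fin q, ∏ u ∈ Finset.range (l + 1), a (v.1 k + (u : ℤ)))⁻¹) :=
  (idx_summable_abs hl hc ha0 hatop hper q hr).of_abs

def idxEquiv (l q : ℕ) (r : ℤ) :
    Idx l (q + 1) r ≃ Σ i : {i : ℤ // r + 1 ≤ i}, Idx l q (i.1 + l) where
  toFun v :=
    ⟨⟨v.1 ⟨0, Nat.succ_pos q⟩, v.2.1 (Nat.succ_pos q)⟩,
     ⟨fun k => v.1 ⟨k.1 + 1, Nat.succ_lt_succ k.2⟩,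
      ⟨fun h => v.2.2 0 (Nat.succ_lt_succ h),
       fun j h => v.2.2 (j + 1) (Nat.succ_lt_succ h)⟩⟩⟩
  invFun σ :=
    ⟨fun k => if h : k.1 = 0 then σ.1.1 else σ.2.1 ⟨k.1 - 1, by omega⟩,
     ⟨fun _ => σ.1.2,
      by
        intro j h
        cases j with
        | zero => exact σ.2.2.1 (Nat.lt_of_succ_lt_succ h)
        | succ j => exact σ.2.2.2 j (Nat.lt_of_succ_lt_succ h)⟩⟩
  left_inv v := by
    apply Subtype.ext
    funext k
    match k with
    | ⟨0, hk⟩ => rfl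
    | ⟨j + 1, hk⟩ => rfl
  right_inv σ := by
    refine Sigma.ext rfl (heq_of_eq ?_)
    apply Subtype.ext
    funext k
    match k with
    | ⟨j, hk⟩ => rfl

theorem idxEquiv_symm_mk0 {l q : ℕ} {r : ℤ}
    (σ : Σ i : {i : ℤ // r + 1 ≤ i}, Idx l q (i.1 + l)) :
    ((idxEquiv l q r).symm σ).1 ⟨0, Nat.succ_pos q⟩ = σ.1.1 := rfl

theorem idxEquiv_symm_mksucc {l q : ℕ} {r : ℤ}
    (σ : Σ i : {i : ℤ // r + 1 ≤ i}, Idx l q (i.1 + l)) (j : ℕ) (h : j + 1 < q + 1) :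
    ((idxEquiv l q r).symm σ).1 ⟨j + 1, h⟩ = σ.2.1 ⟨j, Nat.lt_of_succ_lt_succ h⟩ := rfl

theorem main_tsum {l c : ℕ} {a : ℤ → ℝ} (hl : 1 ≤ l) (hc : 1 ≤ c)
    (ha0 : ∀ i : ℤ, 1 ≤ i → a i ≠ 0) (hatop : Tendsto a atTop atTop)
    (hper : ∀ i : ℤ, 1 ≤ i → a (i + (l : ℤ)) - a i = (c : ℝ)) :
    ∀ (q : ℕ) (r : ℤ), 0 ≤ r →
      (∑' v : Idx l q r,
        (∏ k : Fin q, ∏ u ∈ Finset.range (l + 1), a (v.1 k + (u : ℤ)))⁻¹)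
      = ((q.factorial : ℝ) * (c : ℝ) ^ q * Pr a (r + 1) (l * q))⁻¹ := by
  intro q
  induction q with
  | zero =>
    intro r hr
    have e0 : Idx l 0 r := ⟨fun k => k.elim0, ⟨fun h => absurd h (by omega), fun i h => absurd h (by omega)⟩⟩
    haveI : Subsingleton (Idx l 0 r) :=
      ⟨fun u v => Subtype.ext (funext fun k => k.elim0)⟩
    rw [tsum_eq_single e0 (fun b hb => absurd (Subsingleton.elim b e0) hb)]
    simp [Pr]
  | succ q IH =>
    intro r hr
    set E := idxEquiv l q r with hE
    have hsummE : Summable (fun σ : Σ i : {i : ℤ // r + 1 ≤ i}, Idx l q (i.1 + l) =>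
        (∏ k : Fin (q + 1), ∏ u ∈ Finset.range (l + 1), a ((E.symm σ).1 k + (u : ℤ)))⁻¹) := by
      have h := idx_summable hl hc ha0 hatop hper (q + 1) hr
      exact (Equiv.summable_iff (e := E.symm)
        (f := fun v : Idx l (q + 1) r =>
          (∏ k : Fin (q + 1), ∏ u ∈ Finset.range (l + 1), a (v.1 k + (u : ℤ)))⁻¹)).mpr h
    have h1 : (∑' v : Idx l (q + 1) r,
        (∏ k : Fin (q + 1), ∏ u ∈ Finset.range (l + 1), a (v.1 k + (u : ℤ)))⁻¹)
        = ∑' σ : Σ i : {i : ℤ // r + 1 ≤ i}, Idx l q (i.1 + l),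
        (∏ k : Fin (q + 1), ∏ u ∈ Finset.range (l + 1), a ((E.symm σ).1 k + (u : ℤ)))⁻¹ :=
      (Equiv.tsum_eq (e := E.symm)
        (f := fun v : Idx l (q + 1) r =>
          (∏ k : Fin (q + 1), ∏ u ∈ Finset.range (l + 1), a (v.1 k + (u : ℤ)))⁻¹)).symm
    have hsplit : ∀ (i : {i : ℤ // r + 1 ≤ i}) (w : Idx l q (i.1 + l)),
        (∏ k : Fin (q + 1), ∏ u ∈ Finset.range (l + 1), a ((E.symm ⟨i, w⟩).1 k + (u : ℤ)))⁻¹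
        = (Pr a i.1 (l + 1))⁻¹ *
          (∏ k : Fin q, ∏ u ∈ Finset.range (l + 1), a (w.1 k + (u : ℤ)))⁻¹ := by
      intro i w
      rw [hE, ← mul_inv]
      congr 1
      have h0 : (0 : Fin (q + 1)) = ⟨0, Nat.succ_pos q⟩ := by ext; simp
      rw [Fin.prod_univ_succ, h0, idxEquiv_symm_mk0 ⟨i, w⟩]
      congr 1
    have h2 : ∀ i : {i : ℤ // r + 1 ≤ i},
        (∑' w : Idx l q (i.1 + l),
          (∏ k : Fin (q + 1), ∏ u ∈ Finset.range (l + 1), a ((E.symm ⟨i, w⟩).1 k + (u : ℤ)))⁻¹)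
        = ((q.factorial : ℝ) * (c : ℝ) ^ q)⁻¹ * (Pr a i.1 (l * (q + 1) + 1))⁻¹ := by
      intro i
      have hi1 : (1 : ℤ) ≤ i.1 := by have := i.2; omega
      calc (∑' w : Idx l q (i.1 + l),
            (∏ k : Fin (q + 1), ∏ u ∈ Finset.range (l + 1), a ((E.symm ⟨i, w⟩).1 k + (u : ℤ)))⁻¹)
          = ∑' w : Idx l q (i.1 + l), (Pr a i.1 (l + 1))⁻¹ *
            (∏ k : Fin q, ∏ u ∈ Finset.range (l + 1), a (w.1 k + (u : ℤ)))⁻¹ :=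
            tsum_congr fun w => hsplit i w
        _ = (Pr a i.1 (l + 1))⁻¹ *
            ∑' w : Idx l q (i.1 + l),
              (∏ k : Fin q, ∏ u ∈ Finset.range (l + 1), a (w.1 k + (u : ℤ)))⁻¹ := tsum_mul_left
        _ = (Pr a i.1 (l + 1))⁻¹ *
            ((q.factorial : ℝ) * (c : ℝ) ^ q * Pr a (i.1 + l + 1) (l * q))⁻¹ := by
            rw [IH (i.1 + l) (by omega)]
        _ = ((q.factorial : ℝ) * (c : ℝ) ^ q)⁻¹ * (Pr a i.1 (l * (q + 1) + 1))⁻¹ := by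
            have hmerge : Pr a i.1 (l * (q + 1) + 1) = Pr a i.1 (l + 1) * Pr a (i.1 + l + 1) (l * q) := by
              have hn : l * (q + 1) + 1 = (l + 1) + l * q := by ring
              rw [hn, Pr_add]
              congr 2
              push_cast
              ring
            rw [hmerge, mul_inv, mul_inv]
            ring
    rw [h1, hsummE.tsum_sigma]
    rw [tsum_congr h2]
    rw [tsum_mul_left]
    have hd2 : 1 ≤ l * (q + 1) := Nat.mul_pos hl (Nat.succ_pos q)
    have he2 : (0 : ℝ) < ((q + 1 : ℕ) : ℝ) * (c : ℝ) :=
      mul_pos (Nat.cast_pos.mpr (Nat.succ_pos q)) (Nat.cast_pos.mpr hc)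
    have hone := (oneDim' (d := l * (q + 1)) (e := ((q + 1 : ℕ) : ℝ) * (c : ℝ))
      ha0 hatop hd2 he2 (step hper (q + 1)) hr).tsum_eq
    rw [hone]
    have hP : Pr a (r + 1) (l * (q + 1)) ≠ 0 := Pr_ne_zero ha0 (by omega) _
    have hfq : ((q.factorial : ℝ)) ≠ 0 := Nat.cast_ne_zero.mpr q.factorial_ne_zero
    have hcne : ((c : ℝ)) ≠ 0 := Nat.cast_ne_zero.mpr (by omega)
    rw [Nat.factorial_succ]
    push_cast
    field_simp
    ring

end Tg

/-- **Lemma 6.2 (Tagawa's lemma).** -/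
theorem tagawa_telescoping_lemma (l c q r : ℕ) (hl : 1 ≤ l) (hc : 1 ≤ c) (hq : 1 ≤ q)
    (a : ℤ → ℝ)
    (ha0 : ∀ i : ℤ, 1 ≤ i → a i ≠ 0)
    (hatop : Filter.Tendsto a Filter.atTop Filter.atTop)
    (hper : ∀ i : ℤ, 1 ≤ i → a (i + (l : ℤ)) - a i = (c : ℝ)) :
    Summable (fun v : TagawaIndex l q r =>
      (∏ k : Fin q, ∏ u ∈ Finset.range (l + 1), a (v.1 k + (u : ℤ)))⁻¹) ∧
    (∑' v : TagawaIndex l q r,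
        (∏ k : Fin q, ∏ u ∈ Finset.range (l + 1), a (v.1 k + (u : ℤ)))⁻¹) =
      ((q.factorial : ℝ) * (c : ℝ) ^ q *
        ∏ u ∈ Finset.range (l * q), a ((r : ℤ) + 1 + (u : ℤ)))⁻¹ := by
  constructor
  · exact Tg.idx_summable hl hc ha0 hatop hper q (r := (r : ℤ)) (Int.ofNat_nonneg r)
  · exact Tg.main_tsum hl hc ha0 hatop hper q (r : ℤ) (Int.ofNat_nonneg r)
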